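/- For every natural numbers K ≥ 3 and n ≥ K, T(n², K) ≤ T(n, K) + T(n, K−1)². -/

import Mathlib

/-- The outcome of a cascaded test `t` (a list of items) on a defective set `S`:
the first element of `t` belonging to `S`, or `none` if there is none. -/
def outcome {N : ℕ} (t : List (Fin N)) (S : Finset (Fin N)) : Option (Fin N) :=
  (t.filter (fun x => x ∈ S)).head?

/-- A testing design `𝒯` (an indexed family of tests) is feasible for `(N, K)` if the
map sending each `S ⊆ Fin N` with `|S| ≤ K` to its vector of test outcomes is injective
on `{S | |S| ≤ K}`. -/
def Feasible (N K : ℕ) {T : ℕ} (𝒯 : Fin T → List (Fin N)) : Prop :=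
  Set.InjOn (fun (S : Finset (Fin N)) => fun i : Fin T => outcome (𝒯 i) S)
    {S : Finset (Fin N) | S.card ≤ K}

/-- `TNK N K`: the minimum number of tests over all duplicate-free testing designs
feasible for `(N, K)`. -/
noncomputable def TNK (N K : ℕ) : ℕ :=
  sInf {T : ℕ | ∃ 𝒯 : Fin T → List (Fin N), (∀ i, (𝒯 i).Nodup) ∧ Feasible N K 𝒯}

/-- `fT 𝒯 S v`: the number of tests in the design `𝒯` whose outcome on `S` is `some v`. -/
def fT {N T : ℕ} (𝒯 : Fin T → List (Fin N)) (S : Finset (Fin N)) (v : Fin N) : ℕ :=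
  (Finset.univ.filter (fun i : Fin T => outcome (𝒯 i) S = some v)).card

/-- A design is in systematic form if every test is nonempty and the first element of
each test does not occur in any other test. -/
def Systematic {N T : ℕ} (𝒯 : Fin T → List (Fin N)) : Prop :=
  ∀ i : Fin T, 𝒯 i ≠ [] ∧ ∀ u : Fin N, (𝒯 i).head? = some u → ∀ j : Fin T, j ≠ i → u ∉ 𝒯 j

section Basic
variable {α β : Type*} [DecidableEq α] [DecidableEq β]

def out' (t : List α) (X : Finset α) : Option α := (t.filter (fun x => x ∈ X)).head?

lemma outcome_eq_out' {N : ℕ} (t : List (Fin N)) (S : Finset (Fin N)) :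
    outcome t S = out' t S := rfl

lemma filter_cons_mem {c : α} {t : List α} {X : Finset α} (hc : c ∈ X) :
    (c :: t).filter (fun x => x ∈ X) = c :: t.filter (fun x => x ∈ X) := by
  simp [List.filter_cons, hc]

lemma filter_cons_not_mem {c : α} {t : List α} {X : Finset α} (hc : c ∉ X) :
    (c :: t).filter (fun x => x ∈ X) = t.filter (fun x => x ∈ X) := by
  simp [List.filter_cons, hc]

lemma out'_cons_mem {c : α} {t : List α} {X : Finset α} (hc : c ∈ X) :
    out' (c :: t) X = some c := by
  unfold out'; rw [filter_cons_mem hc]; rfl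

lemma out'_cons_not_mem {c : α} {t : List α} {X : Finset α} (hc : c ∉ X) :
    out' (c :: t) X = out' t X := by
  unfold out'; rw [filter_cons_not_mem hc]

lemma out'_mem {t : List α} {X : Finset α} {c : α} (h : out' t X = some c) :
    c ∈ X ∧ c ∈ t := by
  have hc : c ∈ t.filter (fun x => x ∈ X) := List.mem_of_mem_head? h
  simp only [List.mem_filter, decide_eq_true_eq] at hc
  exact ⟨hc.2, hc.1⟩

lemma out'_append (P Q : List α) (X : Finset α) :
    out' P X = (out' (P ++ Q) X).bind (fun c => if c ∈ P then some c else none) := by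
  unfold out'
  rw [List.filter_append, List.head?_append]
  cases h : P.filter (fun x => x ∈ X) with
  | nil =>
    rw [List.head?_nil, Option.none_or]
    cases h2 : Q.filter (fun x => x ∈ X) with
    | nil => rfl
    | cons c l =>
      have hcX : c ∈ X ∧ c ∈ Q := by
        have : c ∈ Q.filter (fun x => x ∈ X) := by rw [h2]; exact List.mem_cons_self
        simp only [List.mem_filter, decide_eq_true_eq] at this
        exact ⟨this.2, this.1⟩
      have hcP : c ∉ P := by
        intro hcp
        have : c ∈ P.filter (fun x => x ∈ X) := by
          simp [List.mem_filter, hcp, hcX.1]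
        rw [h] at this; exact absurd this List.not_mem_nil
      simp [hcP]
  | cons c l =>
    have hcP : c ∈ P := by
      have : c ∈ P.filter (fun x => x ∈ X) := by rw [h]; exact List.mem_cons_self
      exact (List.mem_filter.mp this).1
    simp [hcP]

lemma out'_append_of_some {P Q : List α} {X : Finset α} {c : α} (h : out' P X = some c) :
    out' (P ++ Q) X = some c := by
  have h2 := out'_append P Q X
  rw [h] at h2
  rcases ho : out' (P ++ Q) X with _ | c'
  · rw [ho] at h2; simp at h2
  · rw [ho] at h2
    by_cases hc' : c' ∈ P
    · simp only [hc', if_pos, Option.bind_some] at h2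
      rw [← Option.some_inj.mp h2]
    · simp [hc'] at h2

lemma out'_erase {t : List α} {X : Finset α} {a : α} (h : out' t X ≠ some a) :
    out' t (X.erase a) = out' t X := by
  induction t with
  | nil => rfl
  | cons c t ih =>
    by_cases hc : c ∈ X
    · by_cases hca : c = a
      · subst hca
        exact absurd (out'_cons_mem hc) h
      · have hce : c ∈ X.erase a := Finset.mem_erase.mpr ⟨hca, hc⟩
        rw [out'_cons_mem hc, out'_cons_mem hce]
    · have hce : c ∉ X.erase a := fun hmem => hc (Finset.mem_of_mem_erase hmem)
      rw [out'_cons_not_mem hc] at h ⊢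
      rw [out'_cons_not_mem hce, ih h]

lemma exists_out'_eq {T k : ℕ} {𝒟 : Fin T → List α}
    (hD : Set.InjOn (fun R => fun i => out' (𝒟 i) R) {R : Finset α | R.card ≤ k})
    {R : Finset α} (hR : R.card ≤ k) {a : α} (ha : a ∈ R) :
    ∃ i, out' (𝒟 i) R = some a := by
  by_contra h
  push_neg at h
  have heq : (fun i => out' (𝒟 i) (R.erase a)) = fun i => out' (𝒟 i) R :=
    funext fun i => out'_erase (h i)
  have hcard : (R.erase a).card ≤ k := le_trans (Finset.card_erase_le) hR
  have := hD hcard hR heq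
  rw [Finset.erase_eq_self] at this
  exact this ha

def colX (a : α) (X : Finset (α × β)) : Finset β :=
  (X.filter (fun p => p.1 = a)).image Prod.snd

lemma mem_colX {a : α} {X : Finset (α × β)} {b : β} : b ∈ colX a X ↔ (a, b) ∈ X := by
  simp only [colX, Finset.mem_image, Finset.mem_filter]
  constructor
  · rintro ⟨⟨a', b'⟩, ⟨hm, rfl⟩, rfl⟩; exact hm
  · intro h; exact ⟨(a, b), ⟨h, rfl⟩, rfl⟩

lemma mem_rows {a : α} {X : Finset (α × β)} :
    a ∈ X.image Prod.fst ↔ ∃ b, (a, b) ∈ X := by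
  simp only [Finset.mem_image]
  constructor
  · rintro ⟨⟨a', b'⟩, hm, rfl⟩; exact ⟨b', hm⟩
  · rintro ⟨b, hb⟩; exact ⟨(a, b), hb, rfl⟩

lemma out'_product {La : List α} {Lb : List β} (hLb : ∀ b, b ∈ Lb) (X : Finset (α × β)) :
    out' (La ×ˢ Lb) X =
      (out' La (X.image Prod.fst)).bind
        (fun a => (out' Lb (colX a X)).map (fun b => (a, b))) := by
  induction La with
  | nil => simp [List.nil_product, out']
  | cons a La ih =>
    rw [List.product_cons]
    by_cases ha : a ∈ X.image Prod.fst
    · have hout : out' (a :: La) (X.image Prod.fst) = some a := by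
        unfold out'; simp [List.filter_cons, ha]
      rw [hout]
      obtain ⟨b0, hb0⟩ := mem_rows.mp ha
      -- the filtered inner list is nonempty
      have hfilter : (Lb.map (fun b => (a, b))).filter (fun p => p ∈ X)
          = (Lb.filter (fun b => b ∈ colX a X)).map (fun b => (a, b)) := by
        rw [List.filter_map]
        congr 1
        apply List.filter_congr
        intro b _
        simp [Function.comp, mem_colX]
      have hne : Lb.filter (fun b => b ∈ colX a X) ≠ [] := by
        have : b0 ∈ Lb.filter (fun b => b ∈ colX a X) := by
          simp [List.mem_filter, hLb b0, mem_colX.mpr hb0]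
        intro hEmpty; rw [hEmpty] at this; exact absurd this List.not_mem_nil
      unfold out'
      rw [List.filter_append, hfilter, List.head?_append]
      rw [Option.bind_some]
      cases hL : Lb.filter (fun b => b ∈ colX a X) with
      | nil => exact absurd hL hne
      | cons b l =>
        simp
    · have hout : out' (a :: La) (X.image Prod.fst) = out' La (X.image Prod.fst) := by
        unfold out'; simp [List.filter_cons, ha]
      have hempty : (Lb.map (fun b => (a, b))).filter (fun p => p ∈ X) = [] := by
        rw [List.filter_map, List.filter_eq_nil_iff.mpr, List.map_nil]
        intro b _
        simp only [Function.comp, decide_eq_true_eq]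
        intro hmem
        exact ha (mem_rows.mpr ⟨b, hmem⟩)
      rw [hout, ← ih]
      unfold out'
      rw [List.filter_append, hempty, List.nil_append]


end Basic
section Cor
variable {α β : Type*} [DecidableEq α] [DecidableEq β]

lemma out'_complete_some {L : List α} (hL : ∀ x, x ∈ L) {Y : Finset α} (hY : Y.Nonempty) :
    ∃ c, out' L Y = some c ∧ c ∈ Y := by
  obtain ⟨y, hy⟩ := hY
  unfold out'
  cases h : L.filter (fun x => x ∈ Y) with
  | nil =>
    exfalso
    have : y ∈ L.filter (fun x => x ∈ Y) := by
      simp [List.mem_filter, hL y, hy]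
    rw [h] at this; exact absurd this List.not_mem_nil
  | cons c l =>
    refine ⟨c, rfl, ?_⟩
    have : c ∈ L.filter (fun x => x ∈ Y) := by rw [h]; exact List.mem_cons_self
    simp only [List.mem_filter, decide_eq_true_eq] at this
    exact this.2

lemma out'_singleton {L : List α} (hL : ∀ x, x ∈ L) (b : α) : out' L ({b} : Finset α) = some b := by
  obtain ⟨c, hc, hcb⟩ := out'_complete_some hL (Finset.singleton_nonempty b)
  rw [Finset.mem_singleton] at hcb
  rw [hc, hcb]

lemma out'_col_some {Lb : List β} (hLb : ∀ b, b ∈ Lb) {a : α} {X : Finset (α × β)}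
    (ha : a ∈ X.image Prod.fst) : ∃ b, out' Lb (colX a X) = some b ∧ b ∈ colX a X := by
  obtain ⟨b0, hb0⟩ := mem_rows.mp ha
  exact out'_complete_some hLb ⟨b0, mem_colX.mpr hb0⟩

lemma out'_product_fst {La : List α} {Lb : List β} (hLb : ∀ b, b ∈ Lb) (X : Finset (α × β)) :
    (out' (La ×ˢ Lb) X).map Prod.fst = out' La (X.image Prod.fst) := by
  rw [out'_product hLb]
  cases ho : out' La (X.image Prod.fst) with
  | none => rfl
  | some a =>
    have ha : a ∈ X.image Prod.fst := (out'_mem ho).1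
    obtain ⟨b, hb, -⟩ := out'_col_some hLb ha
    rw [Option.bind_some, hb]; rfl

lemma col_out_eq {La : List α} {Lb : List β} (hLb : ∀ b, b ∈ Lb)
    {X X' : Finset (α × β)} (hRows : X.image Prod.fst = X'.image Prod.fst)
    (h : out' (La ×ˢ Lb) X = out' (La ×ˢ Lb) X') {a : α}
    (hfirst : out' La (X.image Prod.fst) = some a) :
    out' Lb (colX a X) = out' Lb (colX a X') := by
  have ha : a ∈ X.image Prod.fst := (out'_mem hfirst).1
  have ha' : a ∈ X'.image Prod.fst := hRows ▸ ha
  obtain ⟨b, hb, -⟩ := out'_col_some hLb ha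
  obtain ⟨b', hb', -⟩ := out'_col_some hLb ha'
  have e1 : out' (La ×ˢ Lb) X = some (a, b) := by
    rw [out'_product hLb, hfirst, Option.bind_some, hb]; rfl
  have e2 : out' (La ×ˢ Lb) X' = some (a, b') := by
    rw [out'_product hLb, ← hRows, hfirst, Option.bind_some, hb']; rfl
  rw [hb, hb']
  rw [e1, e2] at h
  simpa using h

lemma card_colX_le {a : α} {X : Finset (α × β)} : (colX a X).card ≤ X.card :=
  le_trans (Finset.card_image_le) (Finset.card_filter_le _ _)

lemma card_colX_eq {a : α} {X : Finset (α × β)} :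
    (colX a X).card = (X.filter (fun p => p.1 = a)).card := by
  apply Finset.card_image_of_injOn
  intro p hp q hq hpq
  simp only [Finset.coe_filter, Set.mem_setOf_eq] at hp hq
  exact Prod.ext (hp.2.trans hq.2.symm) hpq

lemma card_colX_le_pred {a : α} {X : Finset (α × β)} {K : ℕ}
    (hX : X.card ≤ K) (hR : 2 ≤ (X.image Prod.fst).card) (ha : a ∈ X.image Prod.fst) :
    (colX a X).card ≤ K - 1 := by
  obtain ⟨a', ha', hne⟩ := Finset.exists_mem_ne hR a
  obtain ⟨b', hb'⟩ := mem_rows.mp ha'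
  have h1 : 1 ≤ (X.filter (fun p => ¬ p.1 = a)).card := by
    apply Finset.card_pos.mpr
    exact ⟨(a', b'), Finset.mem_filter.mpr ⟨hb', hne⟩⟩
  have h2 := Finset.card_filter_add_card_filter_not (s := X) (p := fun p => p.1 = a)
  rw [card_colX_eq]
  omega

lemma col_card_eq_one {a : α} {X : Finset (α × β)} {K : ℕ}
    (hX : X.card ≤ K) (hR : (X.image Prod.fst).card = K) (ha : a ∈ X.image Prod.fst) :
    (colX a X).card = 1 := by
  have hsum := Finset.card_eq_sum_card_fiberwise
    (f := Prod.fst) (s := X) (t := X.image Prod.fst)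
    (fun x hx => Finset.mem_image_of_mem _ hx)
  have hle : (X.filter (fun p => p.1 = a)).card ≤ 1 := by
    by_contra hcon
    push_neg at hcon
    have hlt : ∑ b ∈ X.image Prod.fst, 1 < ∑ b ∈ X.image Prod.fst,
        (X.filter (fun p => p.1 = b)).card := by
      apply Finset.sum_lt_sum
      · intro b hb
        obtain ⟨c, hc⟩ := mem_rows.mp hb
        exact Finset.card_pos.mpr ⟨(b, c), Finset.mem_filter.mpr ⟨hc, rfl⟩⟩
      · exact ⟨a, ha, hcon⟩
    rw [Finset.sum_const, smul_eq_mul, mul_one, hR, ← hsum] at hlt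
    omega
  have hpos : 1 ≤ (colX a X).card := by
    obtain ⟨b0, hb0⟩ := mem_rows.mp ha
    exact Finset.card_pos.mpr ⟨b0, mem_colX.mpr hb0⟩
  have := card_colX_eq (a := a) (X := X)
  omega

end Cor
section Core
variable {n : ℕ}

/-- Completion of a test to a full permutation-like list (covers everything, test is a prefix). -/
def Lfull {T : ℕ} (D : Fin T → List (Fin n)) (i : Fin T) : List (Fin n) :=
  D i ++ (List.finRange n).filter (fun x => x ∉ D i)

lemma Lfull_complete {T : ℕ} (D : Fin T → List (Fin n)) (i : Fin T) (x : Fin n) :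
    x ∈ Lfull D i := by
  unfold Lfull
  by_cases h : x ∈ D i
  · exact List.mem_append_left _ h
  · exact List.mem_append_right _ (by simp [List.mem_filter, List.mem_finRange, h])

lemma Lfull_nodup {T : ℕ} (D : Fin T → List (Fin n)) (i : Fin T) (h : (D i).Nodup) :
    (Lfull D i).Nodup := by
  unfold Lfull
  refine List.Nodup.append h (List.Nodup.filter _ (List.nodup_finRange n)) ?_
  intro x hx hx2
  simp only [List.mem_filter, decide_eq_true_eq] at hx2
  exact absurd hx (by simpa using hx2.2)

/-- The key relation: the outcome of the original test on the rows of `X`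
is determined by the outcome of the completed product test on `X`. -/
lemma key1 {T : ℕ} (D : Fin T → List (Fin n)) (i : Fin T) {T' : ℕ}
    (D' : Fin T' → List (Fin n)) (j : Fin T') (Y : Finset (Fin n × Fin n)) :
    out' (D i) (Y.image Prod.fst) =
      ((out' (Lfull D i ×ˢ Lfull D' j) Y).map Prod.fst).bind
        (fun c => if c ∈ D i then some c else none) := by
  rw [out'_product_fst (Lfull_complete D' j)]
  exact out'_append _ _ _

theorem core {K T1 T2 : ℕ}
    {A : Fin T1 → List (Fin n)} {B : Fin T2 → List (Fin n)}
    (hA : Set.InjOn (fun S => fun i => out' (A i) S) {S : Finset (Fin n) | S.card ≤ K})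
    (hB : Set.InjOn (fun S => fun i => out' (B i) S) {S : Finset (Fin n) | S.card ≤ K - 1})
    {X X' : Finset (Fin n × Fin n)} (hX : X.card ≤ K) (hX' : X'.card ≤ K)
    (h1 : ∀ i : Fin T1, out' (Lfull A i ×ˢ Lfull A i) X = out' (Lfull A i ×ˢ Lfull A i) X')
    (h2 : ∀ i j : Fin T2, out' (Lfull B i ×ˢ Lfull B j) X = out' (Lfull B i ×ˢ Lfull B j) X') :
    X = X' := by
  -- Step 1: rows agree
  have hRX : (X.image Prod.fst).card ≤ K := le_trans Finset.card_image_le hX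
  have hRX' : (X'.image Prod.fst).card ≤ K := le_trans Finset.card_image_le hX'
  have hRows : X.image Prod.fst = X'.image Prod.fst := by
    apply hA hRX hRX'
    funext i
    simp only
    rw [key1 A i A i X, key1 A i A i X', h1 i]
  -- Step 2: it suffices to show columns agree on each row
  suffices hcols : ∀ a ∈ X.image Prod.fst, colX a X = colX a X' by
    ext ⟨a, b⟩
    constructor
    · intro hm
      have ha : a ∈ X.image Prod.fst := Finset.mem_image_of_mem _ hm
      exact mem_colX.mp ((hcols a ha) ▸ mem_colX.mpr hm)
    · intro hm
      have ha : a ∈ X.image Prod.fst := hRows ▸ Finset.mem_image_of_mem Prod.fst hm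
      exact mem_colX.mp ((hcols a ha).symm ▸ mem_colX.mpr hm)
  intro a ha
  have ha' : a ∈ X'.image Prod.fst := hRows ▸ ha
  rcases lt_or_ge (X.image Prod.fst).card 2 with hR1 | hR2
  · -- a single row: use the A-design on the columns of that row
    have hsing : X.image Prod.fst = {a} := by
      have h1c : (X.image Prod.fst).card = 1 := le_antisymm (by omega)
        (Finset.card_pos.mpr ⟨a, ha⟩)
      obtain ⟨c, hc⟩ := Finset.card_eq_one.mp h1c
      rw [hc] at ha ⊢
      rw [Finset.mem_singleton] at ha
      rw [ha]
    apply hA (le_trans card_colX_le hX) (le_trans card_colX_le hX')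
    funext i
    simp only
    have hfirst : out' (Lfull A i) (X.image Prod.fst) = some a := by
      rw [hsing]; exact out'_singleton (Lfull_complete A i) a
    have hcol := col_out_eq (Lfull_complete A i) hRows (h1 i) hfirst
    rw [out'_append (A i) ((List.finRange n).filter (fun x => x ∉ A i)) (colX a X),
      out'_append (A i) ((List.finRange n).filter (fun x => x ∉ A i)) (colX a X')]
    have : (A i ++ (List.finRange n).filter (fun x => x ∉ A i)) = Lfull A i := rfl
    rw [this, hcol]
  · rcases lt_or_ge (X.image Prod.fst).card K with hRK | hRK
    · -- between 2 and K-1 rows: B-design determines each row's columns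
      have hRcard : (X.image Prod.fst).card ≤ K - 1 := by omega
      obtain ⟨i, hi⟩ := exists_out'_eq hB hRcard ha
      have hfirst : out' (Lfull B i) (X.image Prod.fst) = some a := out'_append_of_some hi
      apply hB (card_colX_le_pred hX hR2 ha) (card_colX_le_pred hX' (hRows ▸ hR2) ha')
      funext j
      simp only
      have hcol := col_out_eq (Lfull_complete B j) hRows (h2 i j) hfirst
      rw [out'_append (B j) ((List.finRange n).filter (fun x => x ∉ B j)) (colX a X),
        out'_append (B j) ((List.finRange n).filter (fun x => x ∉ B j)) (colX a X')]
      have : (B j ++ (List.finRange n).filter (fun x => x ∉ B j)) = Lfull B j := rfl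
      rw [this, hcol]
    · -- exactly K rows: all fibers are singletons, use the A-design witnesses
      have hRK : (X.image Prod.fst).card = K := le_antisymm hRX hRK
      obtain ⟨i, hi⟩ := exists_out'_eq hA hRX ha
      have hfirst : out' (Lfull A i) (X.image Prod.fst) = some a := out'_append_of_some hi
      have hcol := col_out_eq (Lfull_complete A i) hRows (h1 i) hfirst
      obtain ⟨b, hb⟩ := Finset.card_eq_one.mp (col_card_eq_one hX hRK ha)
      obtain ⟨b', hb'⟩ := Finset.card_eq_one.mp
        (col_card_eq_one hX' (hRows ▸ hRK) ha')
      rw [hb, hb', out'_singleton (Lfull_complete A i) b,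
        out'_singleton (Lfull_complete A i) b'] at hcol
      rw [hb, hb', Option.some_inj.mp hcol]

end Core

section Assembly

lemma outcome_map {N : ℕ} {α : Type*} [DecidableEq α] (e : α ≃ Fin N)
    (t : List α) (S : Finset (Fin N)) :
    outcome (t.map e) S = (out' t (S.image e.symm)).map e := by
  unfold outcome out'
  rw [List.filter_map, List.head?_map]
  congr 2
  apply List.filter_congr
  intro x _
  simp only [Function.comp_apply, decide_eq_decide, Finset.mem_image]
  constructor
  · intro h; exact ⟨e x, h, e.symm_apply_apply x⟩
  · rintro ⟨s, hs, rfl⟩; rwa [e.apply_symm_apply]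

lemma singleton_feasible (N K : ℕ) :
    ∃ 𝒯 : Fin N → List (Fin N), (∀ i, (𝒯 i).Nodup) ∧ Feasible N K 𝒯 := by
  refine ⟨fun i => [i], fun i => List.nodup_singleton i, ?_⟩
  intro S hS S' hS' h
  ext x
  have hx := congrFun h x
  simp only [outcome, List.filter_cons, List.filter_nil] at hx
  by_cases h1 : x ∈ S <;> by_cases h2 : x ∈ S' <;> simp [h1, h2] at hx ⊢

lemma construction {n K T1 T2 : ℕ}
    (A : Fin T1 → List (Fin n)) (B : Fin T2 → List (Fin n))
    (hAnodup : ∀ i, (A i).Nodup) (hBnodup : ∀ i, (B i).Nodup)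
    (hAfeas : Feasible n K A) (hBfeas : Feasible n (K - 1) B) :
    ∃ 𝒯 : Fin (T1 + T2 ^ 2) → List (Fin (n ^ 2)),
      (∀ i, (𝒯 i).Nodup) ∧ Feasible (n ^ 2) K 𝒯 := by
  let e : (Fin n × Fin n) ≃ Fin (n ^ 2) := finProdFinEquiv.trans (finCongr (pow_two n).symm)
  let q : Fin (T1 + T2 ^ 2) ≃ Fin T1 ⊕ Fin T2 × Fin T2 :=
    (finCongr (by rw [pow_two])).trans
      (finSumFinEquiv.symm.trans (Equiv.sumCongr (Equiv.refl _) finProdFinEquiv.symm))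
  let pt : Fin T1 ⊕ Fin T2 × Fin T2 → List (Fin n × Fin n) :=
    Sum.elim (fun i => Lfull A i ×ˢ Lfull A i) (fun p => Lfull B p.1 ×ˢ Lfull B p.2)
  refine ⟨fun k => (pt (q k)).map e, ?_, ?_⟩
  · intro k
    apply List.Nodup.map e.injective
    show (pt (q k)).Nodup
    rcases q k with i | ⟨i, j⟩
    · exact List.Nodup.product (Lfull_nodup A i (hAnodup i)) (Lfull_nodup A i (hAnodup i))
    · exact List.Nodup.product (Lfull_nodup B i (hBnodup i)) (Lfull_nodup B j (hBnodup j))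
  · intro S hS S' hS' h
    simp only [Set.mem_setOf_eq] at hS hS'
    have hXcard : (S.image e.symm).card ≤ K := le_trans Finset.card_image_le hS
    have hX'card : (S'.image e.symm).card ≤ K := le_trans Finset.card_image_le hS'
    have houts : ∀ s : Fin T1 ⊕ Fin T2 × Fin T2,
        out' (pt s) (S.image e.symm) = out' (pt s) (S'.image e.symm) := by
      intro s
      have hk := congrFun h (q.symm s)
      simp only [Equiv.apply_symm_apply] at hk
      rw [outcome_map e, outcome_map e] at hk
      exact Option.map_injective e.injective hk
    have hXX' : S.image e.symm = S'.image e.symm :=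
      core hAfeas hBfeas hXcard hX'card
        (fun i => houts (Sum.inl i)) (fun i j => houts (Sum.inr (i, j)))
    have hback : ∀ S0 : Finset (Fin (n ^ 2)), (S0.image e.symm).image e = S0 := by
      intro S0
      ext x
      simp only [Finset.mem_image]
      constructor
      · rintro ⟨a, ⟨b, hb, rfl⟩, rfl⟩
        simpa [Equiv.apply_symm_apply] using hb
      · intro hx
        exact ⟨e.symm x, ⟨x, hx, rfl⟩, e.apply_symm_apply x⟩
    rw [← hback S, ← hback S', hXX']

theorem stmt16 (K n : ℕ) (hK : 3 ≤ K) (hn : K ≤ n) :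
    TNK (n ^ 2) K ≤ TNK n K + TNK n (K - 1) ^ 2 := by
  have hmemA : TNK n K ∈ {T : ℕ | ∃ 𝒯 : Fin T → List (Fin n),
      (∀ i, (𝒯 i).Nodup) ∧ Feasible n K 𝒯} :=
    Nat.sInf_mem ⟨n, singleton_feasible n K⟩
  have hmemB : TNK n (K - 1) ∈ {T : ℕ | ∃ 𝒯 : Fin T → List (Fin n),
      (∀ i, (𝒯 i).Nodup) ∧ Feasible n (K - 1) 𝒯} :=
    Nat.sInf_mem ⟨n, singleton_feasible n (K - 1)⟩
  obtain ⟨A, hAnodup, hAfeas⟩ := hmemA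
  obtain ⟨B, hBnodup, hBfeas⟩ := hmemB
  exact Nat.sInf_le (construction A B hAnodup hBnodup hAfeas hBfeas)
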